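/- Let G be an AH-algebra and let g ∈ G. Then the following are equivalent: (i) g is invertible (there exists h ∈ G with gh = hg = 1); (ii) |g| is invertible; (iii) there exists a real number λ > 0 such that λ·1 ≤ |g|. Moreover, if g⁻¹ exists, then g⁻¹ ∈ CC(g) and the signum s := (g⁺)° − (g⁻)° of g satisfies s² = 1. -/

import Mathlib

/-- An e-ring `(R,E)`: an associative ring `R` with unity together with a set `E ⊆ R`
of effects, satisfying the Foulis axioms.  `E⁺` is realized as the additive submonoid
closure of `E` (the set of all finite sums of effects). -/
structure ERing (R : Type*) [Ring R] where
  E : Set R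
  zero_mem : (0 : R) ∈ E
  one_mem : (1 : R) ∈ E
  compl_mem : ∀ e ∈ E, 1 - e ∈ E
  epos_i : ∀ a ∈ AddSubmonoid.closure E, -a ∈ AddSubmonoid.closure E → a = 0
  epos_ii : ∀ a ∈ AddSubmonoid.closure E, 1 - a ∈ AddSubmonoid.closure E → a ∈ E
  epos_iii : ∀ a ∈ AddSubmonoid.closure E, ∀ b ∈ AddSubmonoid.closure E,
    a * b = b * a → a * b ∈ AddSubmonoid.closure E
  epos_iv : ∀ a ∈ AddSubmonoid.closure E, ∀ b ∈ AddSubmonoid.closure E,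
    a * b * a ∈ AddSubmonoid.closure E
  epos_v : ∀ a ∈ AddSubmonoid.closure E, ∀ b ∈ AddSubmonoid.closure E,
    a * b * a = 0 → a * b = 0 ∧ b * a = 0
  epos_vi : ∀ a ∈ AddSubmonoid.closure E, ∀ b ∈ AddSubmonoid.closure E,
    (a - b) ^ 2 ∈ AddSubmonoid.closure E
  zero_ne_one : (0 : R) ≠ 1

namespace ERing

variable {R : Type*} [Ring R] (er : ERing R)

/-- `E⁺`, the set of all finite sums of effects; the positive cone of the directed group. -/
def Epos : Set R := (AddSubmonoid.closure er.E : Set R)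

/-- The directed group `G = E⁺ - E⁺` of the e-ring. -/
def G : Set R := {g | ∃ a ∈ er.Epos, ∃ b ∈ er.Epos, g = a - b}

/-- The partial order on the directed group: `g ≤ h` iff `h - g ∈ E⁺`. -/
def le (g h : R) : Prop := h - g ∈ er.Epos

/-- The set of projections `P = {p ∈ G : p = p²}`. -/
def P : Set R := {p | p ∈ er.G ∧ p = p ^ 2}

/-- The commutant in `G` of a subset `A ⊆ G`. -/
def commutant (A : Set R) : Set R := {g | g ∈ er.G ∧ ∀ a ∈ A, g * a = a * g}

/-- The bicommutant in `G` of a subset `A ⊆ G`. -/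
def CC (A : Set R) : Set R := er.commutant (er.commutant A)

/-- `s` is the supremum of `A` within the subset `S` (w.r.t. the e-ring order). -/
def IsSupIn (S A : Set R) (s : R) : Prop :=
  s ∈ S ∧ (∀ a ∈ A, er.le a s) ∧ ∀ b ∈ S, (∀ a ∈ A, er.le a b) → er.le s b

/-- `s` is the infimum of `A` within the subset `S` (w.r.t. the e-ring order). -/
def IsInfIn (S A : Set R) (s : R) : Prop :=
  s ∈ S ∧ (∀ a ∈ A, er.le s a) ∧ ∀ b ∈ S, (∀ a ∈ A, er.le b a) → er.le b s

/-- Quadratic annihilation property. -/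
def HasQA : Prop := ∀ g ∈ er.G, ∀ h ∈ er.G, g * h ^ 2 * g = 0 → g * h = 0 ∧ h * g = 0

/-- Commutative Vigier property: every ascending sequence of pairwise commuting elements
of `G` bounded above in `G` has a supremum in `G` which double commutes with the sequence. -/
def HasCV : Prop :=
  ∀ g : ℕ → R, (∀ n, g n ∈ er.G) → (∀ n, er.le (g n) (g (n + 1))) →
    (∀ m n, g m * g n = g n * g m) → (∃ b ∈ er.G, ∀ n, er.le (g n) b) →
    ∃ s, er.IsSupIn er.G (Set.range g) s ∧ s ∈ er.CC (Set.range g)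

/-- `G` is an abstract Hermitian (AH) algebra: there is a semitransparent effect `½`,
`G` has quadratic annihilation, and `G` has the commutative Vigier property. -/
def IsAH : Prop := (∃ h ∈ er.E, h + h = 1) ∧ er.HasQA ∧ er.HasCV

end ERing

namespace ERing

variable {R : Type*} [Ring R] (er : ERing R)

/-- `m` is the absolute value `|g| = (g²)^(1/2)` of `g`: `m ∈ G`, `0 ≤ m`, `m² = g²`. -/
def IsAbs (g m : R) : Prop := m ∈ er.G ∧ er.le 0 m ∧ m ^ 2 = g ^ 2

/-- `a` is the positive part `g⁺ = ½(|g| + g)` of `g`, i.e. `a ∈ G` and `a + a = |g| + g`. -/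
def IsPosPart (g a : R) : Prop := a ∈ er.G ∧ ∃ m, er.IsAbs g m ∧ a + a = m + g

/-- `b` is the negative part `g⁻ = ½(|g| − g)` of `g`, i.e. `b ∈ G` and `b + b = |g| − g`. -/
def IsNegPart (g b : R) : Prop := b ∈ er.G ∧ ∃ m, er.IsAbs g m ∧ b + b = m - g

/-- `p` is the carrier projection `g°` of `g`. -/
def IsCarrier (g p : R) : Prop := p ∈ er.P ∧ ∀ h ∈ er.G, (g * h = 0 ↔ p * h = 0)

end ERing

namespace ERing

variable {R : Type*} [Ring R] [Algebra ℝ R] (er : ERing R)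

/-- The 1-norm `‖g‖ = inf {λ : 0 ≤ λ, −λ·1 ≤ g ≤ λ·1}`. -/
noncomputable def norm1 (g : R) : ℝ :=
  sInf {l : ℝ | 0 ≤ l ∧ er.le (-(l • (1 : R))) g ∧ er.le g (l • (1 : R))}

/-- The spectral lower bound `L_g = sup {λ : λ·1 ≤ g}`. -/
noncomputable def specL (g : R) : ℝ := sSup {l : ℝ | er.le (l • (1 : R)) g}

/-- The spectral upper bound `U_g = inf {λ : g ≤ λ·1}`. -/
noncomputable def specU (g : R) : ℝ := sInf {l : ℝ | er.le g (l • (1 : R))}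

/-- `p` is the spectral projection `p_{g,λ} = 1 − ((g − λ·1)⁺)°`. -/
def IsSpecProj (g : R) (l : ℝ) (p : R) : Prop :=
  ∃ a, er.IsPosPart (g - l • (1 : R)) a ∧ ∃ q, er.IsCarrier a q ∧ p = 1 - q

/-- `d` is the λ-eigenprojection `d_{g,λ} = 1 − (g − λ·1)°`. -/
def IsEigenProj (g : R) (l : ℝ) (d : R) : Prop :=
  ∃ q, er.IsCarrier (g - l • (1 : R)) q ∧ d = 1 - q

end ERing

namespace ERing

variable {R : Type*} [Ring R] {er : ERing R}

lemma epos_zero : (0:R) ∈ er.Epos := (AddSubmonoid.closure er.E).zero_mem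

lemma epos_add {x y : R} (hx : x ∈ er.Epos) (hy : y ∈ er.Epos) : x + y ∈ er.Epos :=
  (AddSubmonoid.closure er.E).add_mem hx hy

lemma epos_of_E {x : R} (hx : x ∈ er.E) : x ∈ er.Epos :=
  AddSubmonoid.subset_closure hx

lemma epos_one : (1:R) ∈ er.Epos := epos_of_E er.one_mem

lemma epos_sub_sq {x y : R} (hx : x ∈ er.Epos) (hy : y ∈ er.Epos) :
    (x - y)^2 ∈ er.Epos := er.epos_vi x hx y hy

lemma G_def {g : R} : g ∈ er.G ↔ ∃ a ∈ er.Epos, ∃ b ∈ er.Epos, g = a - b := Iff.rfl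

lemma G_of_epos {x : R} (hx : x ∈ er.Epos) : x ∈ er.G :=
  ⟨x, hx, 0, epos_zero, by abel⟩

lemma G_zero : (0:R) ∈ er.G := G_of_epos epos_zero
lemma G_one : (1:R) ∈ er.G := G_of_epos epos_one

lemma G_add {g h : R} (hg : g ∈ er.G) (hh : h ∈ er.G) : g + h ∈ er.G := by
  obtain ⟨a, ha, b, hb, rfl⟩ := hg
  obtain ⟨c, hc, d, hd, rfl⟩ := hh
  exact ⟨a + c, epos_add ha hc, b + d, epos_add hb hd, by abel⟩

lemma G_neg {g : R} (hg : g ∈ er.G) : -g ∈ er.G := by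
  obtain ⟨a, ha, b, hb, rfl⟩ := hg
  exact ⟨b, hb, a, ha, by abel⟩

lemma G_sub {g h : R} (hg : g ∈ er.G) (hh : h ∈ er.G) : g - h ∈ er.G := by
  simpa [sub_eq_add_neg] using G_add hg (G_neg hh)

lemma G_sq_epos {g : R} (hg : g ∈ er.G) : g^2 ∈ er.Epos := by
  obtain ⟨a, ha, b, hb, rfl⟩ := hg
  exact epos_sub_sq ha hb

lemma epos_mul_comm {x y : R} (hx : x ∈ er.Epos) (hy : y ∈ er.Epos)
    (h : x * y = y * x) : x * y ∈ er.Epos := er.epos_iii x hx y hy h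

lemma epos_conj {x y : R} (hx : x ∈ er.Epos) (hy : y ∈ er.Epos) :
    x * y * x ∈ er.Epos := er.epos_iv x hx y hy

lemma epos_pow {x : R} (hx : x ∈ er.Epos) : ∀ n : ℕ, x^(n+1) ∈ er.Epos := by
  intro n
  induction n with
  | zero => simpa using hx
  | succ k ih =>
      have : x^(k+1) * x ∈ er.Epos :=
        epos_mul_comm ih hx (by rw [← pow_succ, ← pow_succ'])
      simpa [pow_succ] using this

-- order lemmas
lemma le_def {g h : R} : er.le g h ↔ h - g ∈ er.Epos := Iff.rfl

lemma le_refl (g : R) : er.le g g := by simp [ERing.le, epos_zero]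

lemma le_trans {g h k : R} (h1 : er.le g h) (h2 : er.le h k) : er.le g k := by
  have := epos_add h1 h2
  simpa [ERing.le, show h - g + (k - h) = k - g by abel] using
    (by simpa [add_comm] using this : (h - g) + (k - h) ∈ er.Epos)

lemma le_antisymm {g h : R} (h1 : er.le g h) (h2 : er.le h g) : g = h := by
  have h0 : h - g = 0 := er.epos_i _ h1 (by rw [neg_sub]; exact h2)
  have := sub_eq_zero.mp h0
  exact this.symm

lemma nonneg_iff {g : R} : er.le 0 g ↔ g ∈ er.Epos := by simp [ERing.le]

lemma le_of_sub_epos {g h : R} (h1 : h - g ∈ er.Epos) : er.le g h := h1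

lemma add_le_add_left {g h k : R} (h1 : er.le g h) : er.le (k + g) (k + h) := by
  simpa [ERing.le, show k + h - (k + g) = h - g by abel] using h1

lemma le_add_of_nonneg {g h : R} (h1 : h ∈ er.Epos) : er.le g (g + h) := by
  simpa [ERing.le] using h1

lemma sub_le_of_nonneg {g h : R} (h1 : h ∈ er.Epos) : er.le (g - h) g := by
  simpa [ERing.le] using h1

end ERing
namespace ERing

variable {R : Type*} [Ring R] [Algebra ℝ R] {er : ERing R}

/-- abbreviation for the scalar hypothesis -/
def Scal (er : ERing R) : Prop := ∀ l : ℝ, 0 ≤ l → ∀ a ∈ er.Epos, l • a ∈ er.Epos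

lemma epos_smul (hs : er.Scal) {l : ℝ} (hl : 0 ≤ l) {x : R} (hx : x ∈ er.Epos) :
    l • x ∈ er.Epos := hs l hl x hx

lemma G_smul (hs : er.Scal) (l : ℝ) {g : R} (hg : g ∈ er.G) : l • g ∈ er.G := by
  obtain ⟨a, ha, b, hb, rfl⟩ := hg
  rcases le_or_gt 0 l with h | h
  · exact ⟨l • a, hs l h a ha, l • b, hs l h b hb, by rw [smul_sub]⟩
  · refine ⟨(-l) • b, hs (-l) (by linarith) b hb, (-l) • a, hs (-l) (by linarith) a ha, ?_⟩
    rw [smul_sub]; rw [neg_smul, neg_smul]; abel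

lemma smul_le_smul (hs : er.Scal) {l : ℝ} (hl : 0 ≤ l) {g h : R} (hgh : er.le g h) :
    er.le (l • g) (l • h) := by
  have := hs l hl _ hgh
  simpa [ERing.le, smul_sub] using this

lemma scalar_nonneg (hs : er.Scal) {l : ℝ} (hl : 0 ≤ l) : (l • (1:R)) ∈ er.Epos :=
  hs l hl 1 epos_one

lemma scalar_le_scalar (hs : er.Scal) {l l' : ℝ} (h : l ≤ l') :
    er.le (l • (1:R)) (l' • (1:R)) := by
  have : (l' - l) • (1:R) ∈ er.Epos := scalar_nonneg hs (by linarith)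
  simpa [ERing.le, sub_smul] using this

/-- `1` is an order unit. -/
lemma order_unit_epos {x : R} (hx : x ∈ er.Epos) :
    ∃ n : ℕ, er.le x ((n : ℝ) • (1:R)) := by
  induction hx using AddSubmonoid.closure_induction with
  | mem y hy =>
      exact ⟨1, by simpa [ERing.le] using epos_of_E (er.compl_mem y hy)⟩
  | zero => exact ⟨0, by simpa [ERing.le] using epos_zero⟩
  | add y z _ _ hy hz =>
      obtain ⟨n, hn⟩ := hy
      obtain ⟨k, hk⟩ := hz
      refine ⟨n + k, ?_⟩
      have := epos_add hn hk
      simpa [ERing.le, add_smul,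
        show (n:ℝ) • (1:R) - y + ((k:ℝ) • (1:R) - z) =
          (n:ℝ) • (1:R) + (k:ℝ) • (1:R) - (y + z) by abel] using this

lemma order_unit (hs : er.Scal) {g : R} (hg : g ∈ er.G) :
    ∃ v : ℝ, 1 ≤ v ∧ er.le g (v • (1:R)) := by
  obtain ⟨a, ha, b, hb, rfl⟩ := hg
  obtain ⟨n, hn⟩ := order_unit_epos (er := er) ha
  refine ⟨max 1 (n:ℝ), le_max_left _ _, ?_⟩
  have h1 : er.le (a - b) a := sub_le_of_nonneg hb
  have h2 : er.le a ((n:ℝ) • (1:R)) := hn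
  exact le_trans (le_trans h1 h2) (scalar_le_scalar hs (le_max_right _ _))

/-- product of commuting elements of G lies in G -/
lemma G_mul_comm (hs : er.Scal) {g h : R} (hg : g ∈ er.G) (hh : h ∈ er.G)
    (hc : g * h = h * g) : g * h ∈ er.G := by
  have hsq : (g + h)^2 - g^2 - h^2 = g*h + g*h := by
    simp only [pow_two, mul_add, add_mul, hc]; abel
  have hmem : (g + h)^2 - g^2 - h^2 ∈ er.G :=
    G_sub (G_sub (G_of_epos (G_sq_epos (G_add hg hh))) (G_of_epos (G_sq_epos hg)))
      (G_of_epos (G_sq_epos hh))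
  have := G_smul hs (2⁻¹ : ℝ) hmem
  rw [hsq] at this
  have h2 : (2⁻¹ : ℝ) • (g*h + g*h) = g * h := by
    rw [← two_smul ℝ (g*h), smul_smul]
    norm_num
  rwa [h2] at this

end ERing
namespace ERing

variable {R : Type*} [Ring R] [Algebra ℝ R] {er : ERing R}

lemma pow_le_scalar (hs : er.Scal) {x : R} (hx : x ∈ er.Epos) {u : ℝ} (hu : 0 ≤ u)
    (hxu : er.le x (u • 1)) : ∀ n : ℕ, er.le (x^(n+1)) (u^(n+1) • (1:R)) := by
  intro n
  induction n with
  | zero => simpa using hxu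
  | succ k ih =>
      have key : u^(k+2) • (1:R) - x^(k+2) =
          u^(k+1) • (u • (1:R) - x) + (u^(k+1) • (1:R) - x^(k+1)) * x := by
        simp only [smul_sub, sub_mul, smul_mul_assoc, one_mul, smul_smul, pow_succ, pow_zero]
        abel
      have t1 : u^(k+1) • (u • (1:R) - x) ∈ er.Epos :=
        epos_smul hs (pow_nonneg hu _) hxu
      have hc : (u^(k+1) • (1:R) - x^(k+1)) * x = x * (u^(k+1) • (1:R) - x^(k+1)) := by
        simp only [sub_mul, mul_sub, smul_mul_assoc, mul_smul_comm, one_mul, mul_one,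
          ← pow_succ, ← pow_succ']
      have t2 : (u^(k+1) • (1:R) - x^(k+1)) * x ∈ er.Epos :=
        epos_mul_comm ih hx hc
      show u^(k+2) • (1:R) - x^(k+2) ∈ er.Epos
      rw [key]; exact epos_add t1 t2

lemma chain_le {x : ℕ → R} (hasc : ∀ n, er.le (x n) (x (n+1))) :
    ∀ {m n}, m ≤ n → er.le (x m) (x n) := by
  intro m n h
  induction n with
  | zero => rw [Nat.le_zero.mp h]; exact le_refl _
  | succ k ih =>
      rcases Nat.lt_or_ge m (k+1) with h' | h'
      · exact le_trans (ih (Nat.lt_succ_iff.mp h')) (hasc k)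
      · rw [Nat.le_antisymm h h']; exact le_refl _

lemma arch (hCV : er.HasCV) (hs : er.Scal) {u : R} (hu : u ∈ er.Epos)
    (hb : ∀ ε : ℝ, 0 < ε → er.le u (ε • (1:R))) : u = 0 := by
  set g : ℕ → R := fun n => (n : ℝ) • u with hg
  have hGn : ∀ n, g n ∈ er.G := fun n => G_smul hs _ (G_of_epos hu)
  have hstep : ∀ n, g (n+1) - g n = u := by
    intro n
    simp only [hg]
    rw [show ((n+1 : ℕ) : ℝ) = (n : ℝ) + 1 by push_cast; ring, add_smul, one_smul]
    abel
  have hasc : ∀ n, er.le (g n) (g (n+1)) := by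
    intro n; show g (n+1) - g n ∈ er.Epos; rw [hstep]; exact hu
  have hcomm : ∀ m n, g m * g n = g n * g m := by
    intro m n
    simp only [hg, smul_mul_assoc, mul_smul_comm, smul_smul]
    rw [mul_comm]
  have hbdd : ∃ b ∈ er.G, ∀ n, er.le (g n) b := by
    refine ⟨1, G_one, ?_⟩
    intro n
    cases n with
    | zero => simp only [hg, Nat.cast_zero, zero_smul]; show (1:R) - 0 ∈ er.Epos; simpa using epos_one
    | succ k =>
        have hpos : (0:ℝ) < (k+1 : ℕ) := by positivity
        have := smul_le_smul hs (le_of_lt hpos) (hb (((k+1:ℕ):ℝ))⁻¹ (by positivity))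
        rw [smul_smul, mul_inv_cancel₀ (ne_of_gt hpos), one_smul] at this
        exact this
  obtain ⟨s, hsup, _⟩ := hCV g hGn hasc hcomm hbdd
  obtain ⟨hsG, hub, hmin⟩ := hsup
  have hub' : ∀ n, er.le (g n) (s - u) := by
    intro n
    have := hub (g (n+1)) ⟨n+1, rfl⟩
    show (s - u) - g n ∈ er.Epos
    have he : (s - u) - g n = s - g (n+1) := by rw [← hstep n]; abel
    rw [he]; exact this
  have hle : er.le s (s - u) := hmin (s - u) (G_sub hsG (G_of_epos hu))
    (fun a ⟨n, hn⟩ => hn ▸ hub' n)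
  have : -u ∈ er.Epos := by simpa [ERing.le] using hle
  exact er.epos_i u hu this

lemma small_eq_zero (hQA : er.HasQA) (hCV : er.HasCV) (hs : er.Scal) {d : R}
    (hd : d ∈ er.G)
    (h : ∀ ε : ℝ, 0 < ε → er.le (-(ε • (1:R))) d ∧ er.le d (ε • (1:R))) : d = 0 := by
  have hsq : d^2 = 0 := by
    refine arch hCV hs (G_sq_epos hd) ?_
    intro δ hδ
    set ε := Real.sqrt δ with hε
    have hεpos : 0 < ε := Real.sqrt_pos.mpr hδ
    obtain ⟨h1, h2⟩ := h ε hεpos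
    have m1 : ε • (1:R) - d ∈ er.Epos := h2
    have m2 : ε • (1:R) + d ∈ er.Epos := by
      have : d - (-(ε • (1:R))) ∈ er.Epos := h1
      simpa [sub_neg_eq_add, add_comm] using this
    have expand : (ε • (1:R) - d) * (ε • (1:R) + d) = δ • (1:R) - d^2 := by
      simp only [sub_mul, mul_add, add_mul, mul_sub, smul_mul_assoc, mul_smul_comm,
        one_mul, mul_one, smul_sub, smul_add, smul_smul, pow_two]
      rw [show ε * ε = δ by rw [hε]; exact Real.mul_self_sqrt (le_of_lt hδ)]
      abel
    have expand2 : (ε • (1:R) + d) * (ε • (1:R) - d) = δ • (1:R) - d^2 := by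
      simp only [sub_mul, mul_add, add_mul, mul_sub, smul_mul_assoc, mul_smul_comm,
        one_mul, mul_one, smul_sub, smul_add, smul_smul, pow_two]
      rw [show ε * ε = δ by rw [hε]; exact Real.mul_self_sqrt (le_of_lt hδ)]
      abel
    have := epos_mul_comm m1 m2 (by rw [expand, expand2])
    rw [expand] at this
    exact this
  have := hQA 1 G_one d hd (by simpa using hsq)
  simpa using this.1

lemma vigier_limit (hCV : er.HasCV) (hs : er.Scal)
    (x : ℕ → R) (e : ℕ → ℝ) (hxG : ∀ n, x n ∈ er.G)
    (hasc : ∀ n, er.le (x n) (x (n+1)))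
    (hcomm : ∀ m n, x m * x n = x n * x m)
    (hbdd : ∃ b ∈ er.G, ∀ n, er.le (x n) b)
    (he : ∀ n, (0:ℝ) ≤ e n)
    (htail : ∀ n m, n ≤ m → er.le (x m) (x n + (e n) • (1:R))) :
    ∃ s ∈ er.G, (∀ n, er.le (x n) s) ∧ (∀ n, er.le s (x n + (e n) • (1:R))) ∧
      (∀ b ∈ er.G, (∀ n, er.le (x n) b) → er.le s b) ∧
      (∀ j ∈ er.G, (∀ n, j * x n = x n * j) → j * s = s * j) := by
  obtain ⟨s, ⟨hsG, hub, hmin⟩, hcc⟩ := hCV x hxG hasc hcomm hbdd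
  refine ⟨s, hsG, fun n => hub (x n) ⟨n, rfl⟩, ?_, ?_, ?_⟩
  · intro n
    refine hmin (x n + (e n) • (1:R)) ?_ ?_
    · exact G_add (hxG n) (G_of_epos (scalar_nonneg hs (he n)))
    · rintro a ⟨m, rfl⟩
      rcases le_or_gt n m with h' | h'
      · exact htail n m h'
      · exact le_trans (chain_le hasc (le_of_lt h')) (le_add_of_nonneg (scalar_nonneg hs (he n)))
  · exact fun b hbG hb => hmin b hbG (fun a ⟨n, hn⟩ => hn ▸ hb n)
  · intro j hjG hjx
    exact (hcc.2 j ⟨hjG, fun a ⟨n, hn⟩ => hn ▸ hjx n⟩).symm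

end ERing
namespace ERing

variable {R : Type*} [Ring R] [Algebra ℝ R] {er : ERing R}

lemma epos_pow_all {x : R} (hx : x ∈ er.Epos) : ∀ n : ℕ, x^n ∈ er.Epos := by
  intro n
  cases n with
  | zero => simpa using epos_one
  | succ k => exact epos_pow hx k

lemma epos_sum {ι : Type*} {s : Finset ι} {f : ι → R} (h : ∀ i ∈ s, f i ∈ er.Epos) :
    (∑ i ∈ s, f i) ∈ er.Epos := AddSubmonoid.sum_mem _ h

lemma sum_le_sum {ι : Type*} {s : Finset ι} {f g : ι → R}
    (h : ∀ i ∈ s, er.le (f i) (g i)) : er.le (∑ i ∈ s, f i) (∑ i ∈ s, g i) := by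
  show _ ∈ er.Epos
  rw [← Finset.sum_sub_distrib]
  exact epos_sum h

lemma scalar_le_real (hs : er.Scal) {a b : ℝ} (h : er.le (a • (1:R)) (b • (1:R))) :
    a ≤ b := by
  by_contra hab
  push_neg at hab
  have h1 : (b - a) • (1:R) ∈ er.Epos := by
    have : b • (1:R) - a • (1:R) ∈ er.Epos := h
    simpa [sub_smul] using this
  have h2 : -((b - a) • (1:R)) ∈ er.Epos := by
    have : (a - b) • (1:R) ∈ er.Epos := scalar_nonneg hs (by linarith)
    simpa [← neg_smul, neg_sub] using this
  have h0 := er.epos_i _ h1 h2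
  have hne : b - a ≠ 0 := by intro hq; rw [sub_eq_zero] at hq; linarith
  have : (1:R) = 0 := by
    have := congrArg (fun z : R => (b - a)⁻¹ • z) h0
    simpa [smul_smul, inv_mul_cancel₀ hne] using this
  exact er.zero_ne_one this.symm

/-- Construction of the inverse of an element `m` with `0 < l•1 ≤ m ≤ v•1`. -/
lemma inv_exists (hQA : er.HasQA) (hCV : er.HasCV) (hs : er.Scal) {m : R}
    (hmG : m ∈ er.G) {l v : ℝ} (hl : 0 < l) (hlow : er.le (l • (1:R)) m)
    (hv : 1 ≤ v) (hup : er.le m (v • (1:R))) :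
    ∃ k ∈ er.G, m * k = 1 ∧ k * m = 1 ∧ er.le 0 k ∧
      ∀ j ∈ er.G, j * m = m * j → j * k = k * j := by
  have hv0 : (0:ℝ) < v := lt_of_lt_of_le one_pos hv
  have hlv : l ≤ v := scalar_le_real hs (le_trans hlow hup)
  set μ : ℝ := 1 - l / v with hμdef
  have hμ0 : 0 ≤ μ := by
    have : l / v ≤ 1 := (div_le_one hv0).mpr hlv
    simp [hμdef]; linarith
  have hμ1 : μ < 1 := by
    have : 0 < l / v := by positivity
    simp [hμdef]; linarith
  have mepos : m ∈ er.Epos := by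
    have h0 : er.le 0 m := le_trans (by simpa [ERing.le] using scalar_nonneg hs hl.le) hlow
    simpa using (nonneg_iff.mp h0)
  obtain ⟨c, hcdef⟩ : ∃ c : R, c = 1 - v⁻¹ • m := ⟨_, rfl⟩
  have h1c : (1:R) - c = v⁻¹ • m := by rw [hcdef, sub_sub_cancel]
  have hc0 : c ∈ er.Epos := by
    have : c = v⁻¹ • (v • (1:R) - m) := by
      rw [smul_sub, smul_smul, inv_mul_cancel₀ hv0.ne', one_smul, hcdef]
    rw [this]; exact hs _ (by positivity) _ hup
  have hcμ : er.le c (μ • (1:R)) := by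
    have h1 : μ • (1:R) - c = v⁻¹ • (m - l • (1:R)) := by
      rw [smul_sub, smul_smul, hcdef, hμdef]
      simp only [sub_smul, one_smul]
      rw [show v⁻¹ * l = l / v by rw [div_eq_mul_inv, mul_comm]]
      abel
    show μ • (1:R) - c ∈ er.Epos
    rw [h1]; exact hs _ (by positivity) _ hlow
  have hpow : ∀ i : ℕ, er.le (c^i) ((μ^i) • (1:R)) := by
    intro i
    cases i with
    | zero => show μ^0 • (1:R) - c^0 ∈ er.Epos; simp [epos_zero]
    | succ k => exact pow_le_scalar hs hc0 hμ0 hcμ k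
  set x : ℕ → R := fun n => ∑ i ∈ Finset.range n, c^i with hxdef
  have hx0 : x 0 = 0 := by simp [hxdef]
  have hxsucc : ∀ n, x (n+1) = x n + c^n := by
    intro n; rw [hxdef]; exact Finset.sum_range_succ _ n
  have hxE : ∀ n, x n ∈ er.Epos := fun n => epos_sum (fun i _ => epos_pow_all hc0 i)
  have hxG : ∀ n, x n ∈ er.G := fun n => G_of_epos (hxE n)
  have hasc : ∀ n, er.le (x n) (x (n+1)) := by
    intro n
    show x (n+1) - x n ∈ er.Epos
    rw [hxsucc n]
    simpa using epos_pow_all hc0 n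
  have hcommc : ∀ n, Commute c (x n) :=
    fun n => Commute.sum_right _ _ _ (fun i _ => (Commute.refl c).pow_right i)
  have hxcomm : ∀ p q, x p * x q = x q * x p := fun p q =>
    (Commute.sum_left _ _ _ fun i _ => Commute.sum_right _ _ _ fun j _ =>
      ((Commute.refl c).pow_pow i j)).eq
  set e : ℕ → ℝ := fun n => μ^n / (1 - μ) with hedef
  have he : ∀ n, (0:ℝ) ≤ e n := by
    intro n; rw [hedef]
    have : 0 < 1 - μ := by linarith
    positivity
  have htail : ∀ n m', n ≤ m' → er.le (x m') (x n + (e n) • (1:R)) := by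
    intro n m' hnm
    have hsplit : x n + ∑ i ∈ Finset.Ico n m', c^i = x m' := by
      rw [hxdef]
      simp only [Finset.range_eq_Ico]
      exact Finset.sum_Ico_consecutive _ (Nat.zero_le n) hnm
    have hsum : er.le (∑ i ∈ Finset.Ico n m', c^i) ((e n) • (1:R)) := by
      have h1 : er.le (∑ i ∈ Finset.Ico n m', c^i)
          (∑ i ∈ Finset.Ico n m', (μ^i) • (1:R)) := sum_le_sum (fun i _ => hpow i)
      have h2 : (∑ i ∈ Finset.Ico n m', (μ^i) • (1:R))
          = (∑ i ∈ Finset.Ico n m', μ^i) • (1:R) := by rw [Finset.sum_smul]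
      have h3 : (∑ i ∈ Finset.Ico n m', μ^i) ≤ e n := by
        rw [hedef]; exact geom_sum_Ico_le_of_lt_one hμ0 hμ1
      rw [h2] at h1
      exact le_trans h1 (scalar_le_scalar hs h3)
    show (x n + (e n) • (1:R)) - x m' ∈ er.Epos
    rw [← hsplit]
    have heq : (x n + (e n) • (1:R)) - (x n + ∑ i ∈ Finset.Ico n m', c^i)
        = (e n) • (1:R) - ∑ i ∈ Finset.Ico n m', c^i := by abel
    rw [heq]
    exact hsum
  have hbdd : ∃ b ∈ er.G, ∀ n, er.le (x n) b := by
    refine ⟨(e 0) • (1:R), G_smul hs _ G_one, ?_⟩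
    intro n
    have := htail 0 n (Nat.zero_le n)
    rwa [hx0, zero_add] at this
  obtain ⟨s, hsG, hlb, hub, hmin, hcomm'⟩ :=
    vigier_limit hCV hs x e hxG hasc hxcomm hbdd he htail
  have hsc : c * s = s * c := hcomm' c (G_of_epos hc0) fun n => (hcommc n).eq
  have hcomm1c : (1 - c) * s = s * (1 - c) := by
    rw [sub_mul, mul_sub, one_mul, mul_one, hsc]
  have htele : ∀ n, (1 - c) * x n = 1 - c^n := by
    intro n
    induction n with
    | zero => rw [hx0]; simp
    | succ k ih =>
        rw [hxsucc k, mul_add, ih, sub_mul, one_mul, ← pow_succ']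
        abel
  obtain ⟨d, hddef⟩ : ∃ d : R, d = (1 - c) * s - 1 := ⟨_, rfl⟩
  have hdG : d ∈ er.G := by
    rw [hddef]
    exact G_sub (G_mul_comm hs (G_sub G_one (G_of_epos hc0)) hsG hcomm1c) G_one
  have hkey : ∀ n, (1 - c) * (s - x n) = d + c^n := by
    intro n
    rw [mul_sub, htele n, hddef]
    abel
  have h1cE : (1:R) - c ∈ er.Epos := by rw [h1c]; exact hs _ (by positivity) _ mepos
  have hconj_comm : ∀ n, (1 - c) * (s - x n) = (s - x n) * (1 - c) := fun n =>
    (Commute.sub_left (Commute.one_left _)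
      ((show Commute c s from hsc).sub_right (hcommc n))).eq
  have hlow2 : ∀ n, d + (μ^n) • (1:R) ∈ er.Epos := by
    intro n
    have t1 : (1 - c) * (s - x n) ∈ er.Epos :=
      epos_mul_comm h1cE (hlb n) (hconj_comm n)
    
    have t2 : (μ^n) • (1:R) - c^n ∈ er.Epos := hpow n
    have hid : d + (μ^n) • (1:R) = (1 - c) * (s - x n) + ((μ^n) • (1:R) - c^n) := by
      rw [hkey n]; abel
    rw [hid]; exact epos_add t1 t2
  have hup2 : ∀ n, (e n) • (1:R) - d ∈ er.Epos := by
    intro n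
    have h2 : (e n) • (1:R) - (s - x n) ∈ er.Epos := by
      have := hub n
      have heq : (x n + (e n) • (1:R)) - s = (e n) • (1:R) - (s - x n) := by abel
      rw [← heq]; exact this
    have hbase : Commute (1 - c) (s - x n) :=
      Commute.sub_left (Commute.one_left _)
        ((show Commute c s from hsc).sub_right (hcommc n))
    have comm2 : (1 - c) * ((e n) • (1:R) - (s - x n))
        = ((e n) • (1:R) - (s - x n)) * (1 - c) :=
      (Commute.sub_right (((Commute.one_right (1 - c))).smul_right (e n)) hbase).eq
    have hA : (1 - c) * ((e n) • (1:R) - (s - x n)) ∈ er.Epos :=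
      epos_mul_comm h1cE h2 comm2
    have hB : (e n) • c ∈ er.Epos := hs _ (he n) _ hc0
    have hC : c^n ∈ er.Epos := epos_pow_all hc0 n
    have hid : (e n) • (1:R) - d
        = ((1 - c) * ((e n) • (1:R) - (s - x n)) + (e n) • c) + c^n := by
      rw [mul_sub, hkey n, mul_smul_comm, mul_one, smul_sub]
      abel
    rw [hid]; exact epos_add (epos_add hA hB) hC
  have hdz : d = 0 := by
    refine small_eq_zero hQA hCV hs hdG ?_
    intro ε hε
    set K : ℝ := max 1 (1 - μ)⁻¹ with hKdef
    have hK : (0:ℝ) < K := lt_of_lt_of_le one_pos (le_max_left _ _)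
    obtain ⟨n, hn⟩ := exists_pow_lt_of_lt_one (x := ε / K) (by positivity) hμ1
    have hμn : μ^n * K < ε := by
      rw [← lt_div_iff₀ hK]; exact hn
    have h1 : μ^n ≤ μ^n * K := le_mul_of_one_le_right (pow_nonneg hμ0 n) (le_max_left _ _)
    have h2 : e n ≤ μ^n * K := by
      show μ^n / (1 - μ) ≤ μ^n * K
      rw [div_eq_mul_inv]
      exact mul_le_mul_of_nonneg_left (le_max_right _ _) (pow_nonneg hμ0 n)
    constructor
    · show d - (-(ε • (1:R))) ∈ er.Epos
      have heq : d - (-(ε • (1:R))) = (d + (μ^n) • (1:R)) + (ε - μ^n) • (1:R) := by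
        rw [sub_smul]; abel
      rw [heq]
      exact epos_add (hlow2 n) (scalar_nonneg hs (by linarith))
    · show ε • (1:R) - d ∈ er.Epos
      have heq : ε • (1:R) - d = ((e n) • (1:R) - d) + (ε - e n) • (1:R) := by
        rw [sub_smul]; abel
      rw [heq]
      exact epos_add (hup2 n) (scalar_nonneg hs (by linarith))
  have hinv1 : (1 - c) * s = 1 := by
    rw [hddef] at hdz
    exact sub_eq_zero.mp hdz
  have hinv2 : s * (1 - c) = 1 := by rw [← hcomm1c]; exact hinv1
  refine ⟨v⁻¹ • s, G_smul hs _ hsG, ?_, ?_, ?_, ?_⟩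
  · rw [mul_smul_comm]
    have : m * s = v • (1:R) := by
      have h4 : (v⁻¹ • m) * s = 1 := by rw [← h1c]; exact hinv1
      have := congrArg (fun z : R => v • z) h4
      simpa [smul_mul_assoc, smul_smul, mul_inv_cancel₀ hv0.ne'] using this
    rw [this, smul_smul, inv_mul_cancel₀ hv0.ne', one_smul]
  · rw [smul_mul_assoc]
    have : s * m = v • (1:R) := by
      have h4 : s * (v⁻¹ • m) = 1 := by rw [← h1c]; exact hinv2
      have := congrArg (fun z : R => v • z) h4
      simpa [mul_smul_comm, smul_smul, mul_inv_cancel₀ hv0.ne'] using this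
    rw [this, smul_smul, inv_mul_cancel₀ hv0.ne', one_smul]
  · show v⁻¹ • s - 0 ∈ er.Epos
    have hsE : s ∈ er.Epos := by
      have h5 : s - x 0 ∈ er.Epos := hlb 0
      rwa [hx0, sub_zero] at h5
    simpa using hs _ (by positivity) _ hsE
  · intro j hjG hjm
    have hjc : Commute j c := by
      show j * c = c * j
      rw [hcdef, mul_sub, sub_mul, mul_one, one_mul, mul_smul_comm, smul_mul_assoc, hjm]
    have hjx : ∀ n, j * x n = x n * j := fun n =>
      (Commute.sum_right _ _ _ fun i _ => hjc.pow_right i).eq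
    have hjs : j * s = s * j := hcomm' j hjG hjx
    rw [mul_smul_comm, smul_mul_assoc, hjs]

end ERing
namespace ERing

variable {R : Type*} [Ring R] [Algebra ℝ R] {er : ERing R}

/-- Construction of the square root of an element `c` with `0 < l•1 ≤ c ≤ 1`,
double commuting with `c`. -/
lemma sqrt_exists (hQA : er.HasQA) (hCV : er.HasCV) (hs : er.Scal) {c : R}
    (hcG : c ∈ er.G) {l : ℝ} (hl : 0 < l) (hl1 : l ≤ 1)
    (hlow : er.le (l • (1:R)) c) (hup : er.le c 1) :
    ∃ s ∈ er.G, er.le ((l/2) • (1:R)) s ∧ er.le 0 s ∧ s^2 = c ∧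
      ∀ j ∈ er.G, j * c = c * j → j * s = s * j := by
  have hcE : c ∈ er.Epos := by
    have h0 : er.le 0 c := le_trans (by simpa [ERing.le] using scalar_nonneg hs hl.le) hlow
    simpa using nonneg_iff.mp h0
  have hupE : (1:R) - c ∈ er.Epos := hup
  obtain ⟨X, hX0, hXs⟩ : ∃ X : ℕ → R, X 0 = 0 ∧
      ∀ n, X (n+1) = X n + (2⁻¹:ℝ) • (c - (X n)^2) :=
    ⟨fun n => Nat.rec (0:R) (fun _ y => y + (2⁻¹:ℝ) • (c - y^2)) n, rfl, fun n => rfl⟩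
  obtain ⟨D, hDdef⟩ : ∃ D : ℕ → R, D = fun n => (2⁻¹:ℝ) • (c - (X n)^2) := ⟨_, rfl⟩
  have hDn : ∀ n, D n = (2⁻¹:ℝ) • (c - (X n)^2) := fun n => by rw [hDdef]
  have hXs' : ∀ n, X (n+1) = X n + D n := fun n => by rw [hDn n]; exact hXs n
  have hXG : ∀ n, X n ∈ er.G := by
    intro n
    induction n with
    | zero => rw [hX0]; exact G_zero
    | succ k ih =>
        rw [hXs k]
        exact G_add ih (G_smul hs _ (G_sub hcG (G_of_epos (G_sq_epos ih))))
  have hD2 : ∀ n, (2:ℝ) • D n = c - (X n)^2 := by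
    intro n
    rw [hDn n, smul_smul, show (2:ℝ)*2⁻¹ = 1 by norm_num, one_smul]
  -- commutation
  have hXcj : ∀ j : R, Commute j c → ∀ n, Commute j (X n) := by
    intro j hjc n
    induction n with
    | zero => rw [hX0]; exact Commute.zero_right j
    | succ k ih =>
        rw [hXs k]
        exact ih.add_right ((hjc.sub_right (ih.pow_right 2)).smul_right _)
  have hXc : ∀ n, Commute c (X n) := fun n => hXcj c (Commute.refl c) n
  have hXX : ∀ p q, Commute (X p) (X q) := fun p q => hXcj (X p) (hXc p).symm q
  have hDcomm : ∀ n, Commute (D n) (X n) := by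
    intro n
    rw [hDn n]
    exact ((Commute.sub_left (hXc n) ((Commute.refl (X n)).pow_left 2)).smul_left (2⁻¹:ℝ))
  have hDX1 : ∀ n, Commute (D n) (X (n+1)) := by
    intro n
    rw [hXs' n]; exact (hDcomm n).add_right (Commute.refl _)
  -- main induction
  have main : ∀ n, X n ∈ er.Epos ∧ ((1:R) - X n ∈ er.Epos) ∧ (c - (X n)^2 ∈ er.Epos) := by
    intro n
    induction n with
    | zero =>
        refine ⟨by rw [hX0]; exact epos_zero, ?_, ?_⟩
        · rw [hX0, sub_zero]; exact epos_one
        · rw [hX0]; simpa using hcE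
    | succ k ih =>
        obtain ⟨h1, h2, h3⟩ := ih
        have hDE : D k ∈ er.Epos := by rw [hDn k]; exact hs _ (by norm_num) _ h3
        have hXk1 : X (k+1) ∈ er.Epos := by
          rw [hXs' k]; exact epos_add h1 hDE
        have hid1 : (1:R) - X (k+1) = (2⁻¹:ℝ) • ((1 - X k)^2 + (1 - c)) := by
          rw [hXs k]
          simp only [pow_two, mul_sub, sub_mul, one_mul, mul_one, smul_add, smul_sub]
          module
        have h2' : (1:R) - X (k+1) ∈ er.Epos := by
          rw [hid1]
          exact hs _ (by norm_num) _ (epos_add (G_sq_epos (G_sub G_one (hXG k))) hupE)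
        refine ⟨hXk1, h2', ?_⟩
        have hkey : c - (X (k+1))^2 = D k * ((1 - X k) + (1 - X (k+1))) := by
          have hc_eq : c = (2:ℝ) • D k + (X k)^2 := by rw [hD2 k]; abel
          have hXD : X k * D k = D k * X k := (hDcomm k).symm.eq
          calc c - (X (k+1))^2 = (2:ℝ) • D k + (X k)^2 - (X k + D k)^2 := by
                rw [← hc_eq, hXs' k]
            _ = D k * ((1 - X k) + (1 - (X k + D k))) := by
                simp only [pow_two, mul_add, add_mul, mul_sub, sub_mul, mul_one, one_mul]
                rw [hXD]
                module
            _ = D k * ((1 - X k) + (1 - X (k+1))) := by rw [← hXs' k]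
        rw [hkey]
        refine epos_mul_comm hDE (epos_add h2 h2') ?_
        exact (((Commute.one_right _).sub_right (hDcomm k)).add_right
          ((Commute.one_right _).sub_right (hDX1 k))).eq
  have hDE : ∀ n, D n ∈ er.Epos := by
    intro n; rw [hDn n]; exact hs _ (by norm_num) _ (main n).2.2
  have hasc : ∀ n, er.le (X n) (X (n+1)) := by
    intro n
    show X (n+1) - X n ∈ er.Epos
    rw [hXs' n, add_sub_cancel_left]
    exact hDE n
  set μ : ℝ := 1 - l/2 with hμdef
  have hμh : (2:ℝ)⁻¹ ≤ μ := by rw [hμdef]; linarith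
  have hμ0 : (0:ℝ) ≤ μ := by rw [hμdef]; linarith
  have hμ1 : μ < 1 := by rw [hμdef]; linarith
  have hX1 : X 1 = (2⁻¹:ℝ) • c := by
    rw [hXs 0, hX0]; simp
  have hXn_low : ∀ n, 1 ≤ n → er.le ((l/2) • (1:R)) (X n) := by
    intro n hn
    have h1 : er.le ((l/2) • (1:R)) (X 1) := by
      rw [hX1]
      have := smul_le_smul hs (show (0:ℝ) ≤ 2⁻¹ by norm_num) hlow
      rw [smul_smul] at this
      rw [show l/2 = 2⁻¹ * l by ring]
      exact this
    exact le_trans h1 (chain_le hasc hn)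
  -- geometric decay
  have hgeo : ∀ n, 1 ≤ n → er.le (D (n+1)) (μ • D n) := by
    intro n hn
    have hkey : c - (X (n+1))^2 = D n * ((1 - X n) + (1 - X (n+1))) := by
      have hc_eq : c = (2:ℝ) • D n + (X n)^2 := by rw [hD2 n]; abel
      have hXD : X n * D n = D n * X n := (hDcomm n).symm.eq
      calc c - (X (n+1))^2 = (2:ℝ) • D n + (X n)^2 - (X n + D n)^2 := by
            rw [← hc_eq, hXs' n]
        _ = D n * ((1 - X n) + (1 - (X n + D n))) := by
            simp only [pow_two, mul_add, add_mul, mul_sub, sub_mul, mul_one, one_mul]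
            rw [hXD]
            module
        _ = D n * ((1 - X n) + (1 - X (n+1))) := by rw [← hXs' n]
    have hDn1 : D (n+1) = (2⁻¹:ℝ) • (D n * ((1 - X n) + (1 - X (n+1)))) := by
      rw [hDn (n+1), hkey]
    have hid : (μ • D n) - D (n+1)
        = (2⁻¹:ℝ) • (D n * ((X n - (l/2) • (1:R)) + (X (n+1) - (l/2) • (1:R)))) := by
      rw [hDn1, hμdef]
      simp only [mul_add, mul_sub, mul_one, mul_smul_comm, smul_add, smul_sub, smul_smul,
        sub_smul, one_smul]
      module
    show (μ • D n) - D (n+1) ∈ er.Epos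
    rw [hid]
    refine hs _ (by norm_num) _ (epos_mul_comm (hDE n)
      (epos_add (hXn_low n hn) (hXn_low (n+1) (by omega))) ?_)
    exact (((hDcomm n).sub_right ((Commute.one_right _).smul_right _)).add_right
      ((hDX1 n).sub_right ((Commute.one_right _).smul_right _))).eq
  have hDhalf : ∀ n, er.le (D n) ((2⁻¹:ℝ) • (1:R)) := by
    intro n
    show (2⁻¹:ℝ) • (1:R) - D n ∈ er.Epos
    have hid : (2⁻¹:ℝ) • (1:R) - D n = (2⁻¹:ℝ) • ((1 - c) + (X n)^2) := by
      rw [hDn n]; module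
    rw [hid]
    exact hs _ (by norm_num) _ (epos_add hupE (G_sq_epos (hXG n)))
  have hshift : ∀ k, er.le (D (k+1)) ((μ^k * 2⁻¹) • (1:R)) := by
    intro k
    induction k with
    | zero => simpa using hDhalf 1
    | succ j ih =>
        have h1 : er.le (D (j+2)) (μ • D (j+1)) := hgeo (j+1) (by omega)
        have h2 := smul_le_smul hs hμ0 ih
        rw [smul_smul] at h2
        have h3 := le_trans h1 h2
        rw [show μ * (μ^j * 2⁻¹) = μ^(j+1) * 2⁻¹ by ring] at h3
        exact h3
  have hDle : ∀ n, er.le (D n) ((μ^n) • (1:R)) := by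
    intro n
    cases n with
    | zero =>
        refine le_trans (hDhalf 0) (scalar_le_scalar hs (by norm_num))
    | succ k =>
        refine le_trans (hshift k) (scalar_le_scalar hs ?_)
        have h4 : μ^k * 2⁻¹ ≤ μ^k * μ := mul_le_mul_of_nonneg_left hμh (pow_nonneg hμ0 k)
        rw [pow_succ]; linarith
  set e : ℕ → ℝ := fun n => μ^n / (1 - μ) with hedef
  have hepos : ∀ n, (0:ℝ) ≤ e n := by
    intro n
    show (0:ℝ) ≤ μ^n / (1 - μ)
    have : (0:ℝ) < 1 - μ := by linarith
    positivity
  have htail : ∀ n m', n ≤ m' → er.le (X m') (X n + (e n) • (1:R)) := by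
    intro n m' hnm
    have hXsum : ∀ k, X k = ∑ i ∈ Finset.range k, D i := by
      intro k; induction k with
      | zero => rw [hX0, Finset.range_zero, Finset.sum_empty]
      | succ j ih => rw [hXs' j, ih, Finset.sum_range_succ]
    have hsplit : X n + ∑ i ∈ Finset.Ico n m', D i = X m' := by
      rw [hXsum n, hXsum m']
      simp only [Finset.range_eq_Ico]
      exact Finset.sum_Ico_consecutive _ (Nat.zero_le n) hnm
    have hsum2 : er.le (∑ i ∈ Finset.Ico n m', D i) ((e n) • (1:R)) := by
      have h1 : er.le (∑ i ∈ Finset.Ico n m', D i)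
          (∑ i ∈ Finset.Ico n m', (μ^i) • (1:R)) := sum_le_sum (fun i _ => hDle i)
      rw [Finset.sum_smul.symm] at h1
      refine le_trans h1 (scalar_le_scalar hs ?_)
      show _ ≤ μ^n / (1 - μ)
      exact geom_sum_Ico_le_of_lt_one hμ0 hμ1
    show (X n + (e n) • (1:R)) - X m' ∈ er.Epos
    rw [← hsplit]
    have heq : (X n + (e n) • (1:R)) - (X n + ∑ i ∈ Finset.Ico n m', D i)
        = (e n) • (1:R) - ∑ i ∈ Finset.Ico n m', D i := by abel
    rw [heq]
    exact hsum2
  have hbdd : ∃ b ∈ er.G, ∀ n, er.le (X n) b := by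
    refine ⟨1, G_one, ?_⟩
    intro n
    exact (main n).2.1
  obtain ⟨s, hsG, hlb, hub, hmin, hcomm'⟩ :=
    vigier_limit hCV hs X e hXG hasc (fun p q => (hXX p q).eq) hbdd hepos htail
  have hsE : s ∈ er.Epos := by
    have h5 : s - X 0 ∈ er.Epos := hlb 0
    rwa [hX0, sub_zero] at h5
  have hs1 : er.le s 1 := hmin 1 G_one (fun n => (main n).2.1)
  have hlow_s : er.le ((l/2) • (1:R)) s := le_trans (hXn_low 1 le_rfl) (hlb 1)
  have hsX : ∀ p, Commute s (X p) :=
    fun p => Commute.symm (hcomm' (X p) (hXG p) (fun n => (hXX p n).eq))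
  obtain ⟨w, hwdef⟩ : ∃ w : R, w = c - s^2 := ⟨_, rfl⟩
  have hwG : w ∈ er.G := by rw [hwdef]; exact G_sub hcG (G_of_epos (G_sq_epos hsG))
  have hup_w : ∀ n, er.le w (((2:ℝ)*μ^n) • (1:R)) := by
    intro n
    have hfact : (s + X n) * (s - X n) = s^2 - (X n)^2 := ((hsX n).sq_sub_sq).symm
    show ((2:ℝ)*μ^n) • (1:R) - w ∈ er.Epos
    have hid : ((2:ℝ)*μ^n) • (1:R) - w
        = (2:ℝ) • ((μ^n) • (1:R) - D n) + ((s + X n) * (s - X n)) := by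
      rw [hfact, hwdef, smul_sub, hD2 n, smul_smul]
      module
    rw [hid]
    refine epos_add (hs _ (by norm_num) _ (hDle n)) (epos_mul_comm ?_ ?_ ?_)
    · exact epos_add hsE (main n).1
    · exact hlb n
    · exact ((Commute.add_left (Commute.refl s) (hsX n).symm).sub_right
        (Commute.add_left (hsX n) (Commute.refl (X n)))).eq
  have hlow_w : ∀ n, w + (((2:ℝ)*(e n) + (e n)^2) • (1:R)) ∈ er.Epos := by
    intro n
    have h7 : Commute (X n + (e n) • (1:R)) s :=
      Commute.add_left (hsX n).symm ((Commute.one_left s).smul_left _)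
    have hcommA : Commute ((X n + (e n) • (1:R)) + s) ((X n + (e n) • (1:R)) - s) :=
      (Commute.add_left (Commute.refl _) h7.symm).sub_right
        (Commute.add_left h7 (Commute.refl s))
    have hA : ((X n + (e n) • (1:R)) + s) * ((X n + (e n) • (1:R)) - s)
        = (X n + (e n) • (1:R))^2 - s^2 := (h7.sq_sub_sq).symm
    have hid : w + (((2:ℝ)*(e n) + (e n)^2) • (1:R))
        = (((X n + (e n) • (1:R)) + s) * ((X n + (e n) • (1:R)) - s))
          + (2:ℝ) • (D n) + ((2:ℝ)*(e n)) • ((1:R) - X n) := by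
      rw [hA, hD2 n, hwdef]
      simp only [pow_two, add_mul, mul_add, mul_smul_comm, smul_mul_assoc, mul_one,
        one_mul, smul_add, smul_sub, smul_smul]
      module
    rw [hid]
    refine epos_add (epos_add (epos_mul_comm ?_ ?_ hcommA.eq) ?_) ?_
    · exact epos_add (epos_add (main n).1 (scalar_nonneg hs (hepos n))) hsE
    · exact hub n
    · exact hs _ (by norm_num) _ (hDE n)
    · refine hs _ ?_ _ (main n).2.1
      have := hepos n; positivity
  have hw0 : w = 0 := by
    refine small_eq_zero hQA hCV hs hwG ?_
    intro ε hε
    set B : ℝ := (1 - μ)⁻¹ with hBdef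
    have h1μ : (0:ℝ) < 1 - μ := by linarith
    have hB0 : (0:ℝ) < B := by rw [hBdef]; positivity
    set C : ℝ := max 2 (2*B + B*B) with hCdef
    have hC2 : (2:ℝ) ≤ C := le_max_left _ _
    have hC0 : (0:ℝ) < C := lt_of_lt_of_le two_pos hC2
    obtain ⟨n, hn⟩ := exists_pow_lt_of_lt_one (x := ε / C) (by positivity) hμ1
    have hμn : μ^n * C < ε := by rw [← lt_div_iff₀ hC0]; exact hn
    have hp : (0:ℝ) ≤ μ^n := pow_nonneg hμ0 n
    have hμn1 : μ^n ≤ 1 := pow_le_one₀ hμ0 hμ1.le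
    have hen : e n = μ^n * B := by
      show μ^n/(1-μ) = _
      rw [div_eq_mul_inv, hBdef]
    have hb1 : (2:ℝ)*μ^n ≤ μ^n * C := by
      have := mul_le_mul_of_nonneg_left hC2 hp
      linarith
    have hb2 : (2:ℝ)*(e n) + (e n)^2 ≤ μ^n * C := by
      have h8 : 2*B + B*B ≤ C := le_max_right _ _
      rw [hen]
      have h10 : μ^n * μ^n ≤ μ^n := by nlinarith
      nlinarith [mul_le_mul_of_nonneg_right h10 (mul_nonneg hB0.le hB0.le),
        mul_le_mul_of_nonneg_left h8 hp]
    constructor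
    · show w - (-(ε • (1:R))) ∈ er.Epos
      have heq : w - (-(ε • (1:R)))
          = (w + (((2:ℝ)*(e n) + (e n)^2) • (1:R)))
            + ((ε - ((2:ℝ)*(e n) + (e n)^2)) • (1:R)) := by
        rw [sub_neg_eq_add, sub_smul]; abel
      rw [heq]
      exact epos_add (hlow_w n) (scalar_nonneg hs (by linarith))
    · show ε • (1:R) - w ∈ er.Epos
      have heq : ε • (1:R) - w
          = (((2:ℝ)*μ^n) • (1:R) - w) + ((ε - (2:ℝ)*μ^n) • (1:R)) := by
        rw [sub_smul]; abel
      rw [heq]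
      exact epos_add (hup_w n) (scalar_nonneg hs (by linarith))
  have hs2 : s^2 = c := by
    rw [hwdef] at hw0
    exact (sub_eq_zero.mp hw0).symm
  refine ⟨s, hsG, hlow_s, ?_, hs2, ?_⟩
  · show s - 0 ∈ er.Epos
    rwa [sub_zero]
  · intro j hjG hjc
    exact hcomm' j hjG (fun n => (hXcj j hjc n).eq)

end ERing
namespace ERing

variable {R : Type*} [Ring R] [Algebra ℝ R] {er : ERing R}

/-- Transfer of invertibility across elements with equal squares. -/
lemma inv_transfer (hs : er.Scal) {p q : R} (hpG : p ∈ er.G) (hsq : p * p = q * q)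
    {h : R} (hhG : h ∈ er.G) (hqh : q * h = 1) (hhq : h * q = 1) :
    ∃ k ∈ er.G, p * k = 1 ∧ k * p = 1 := by
  have e1 : p * (p * (h * h)) = 1 := by
    rw [show p * (p * (h * h)) = (p * p) * (h * h) by rw [mul_assoc], hsq,
      show (q * q) * (h * h) = q * ((q * h) * h) by rw [mul_assoc, mul_assoc], hqh,
      one_mul, hqh]
  have e2 : ((h * h) * p) * p = 1 := by
    rw [mul_assoc, hsq, show (h * h) * (q * q) = h * ((h * q) * q) by
      rw [mul_assoc, mul_assoc], hhq, one_mul, hhq]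
  have hxy : (h * h) * p = p * (h * h) := left_inv_eq_right_inv e2 e1
  have hh2G : h * h ∈ er.G := by
    have := G_of_epos (G_sq_epos hhG); rwa [pow_two] at this
  refine ⟨p * (h * h), G_mul_comm hs hpG hh2G hxy.symm, e1, ?_⟩
  rw [← hxy]; exact e2

/-- A positive invertible element is bounded below by a positive scalar. -/
lemma pos_inv_lower (hs : er.Scal) {m k : R} (hmG : m ∈ er.G) (hm0 : er.le 0 m)
    (hkG : k ∈ er.G) (hmk : m * k = 1) (hkm : k * m = 1) :
    ∃ l : ℝ, 0 < l ∧ er.le (l • (1:R)) m := by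
  have hmE : m ∈ er.Epos := by simpa using nonneg_iff.mp hm0
  have hcomm : m * k = k * m := by rw [hmk, hkm]
  have hkE : k ∈ er.Epos := by
    have h1 : m * (k * k) = k := by rw [← mul_assoc, hmk, one_mul]
    have h2 : (k * k) * m = k := by rw [mul_assoc, hkm, mul_one]
    have hkkE : k * k ∈ er.Epos := by
      have := G_sq_epos hkG; rwa [pow_two] at this
    have := epos_mul_comm hmE hkkE (by rw [h1, h2])
    rwa [h1] at this
  obtain ⟨v, hv1, hvk⟩ := order_unit hs (G_of_epos hkE)
  have hv0 : (0:ℝ) < v := lt_of_lt_of_le one_pos hv1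
  have hme : m * (v • (1:R) - k) = v • m - 1 := by
    rw [mul_sub, mul_smul_comm, mul_one, hmk]
  have hcomm2 : m * (v • (1:R) - k) = (v • (1:R) - k) * m := by
    rw [hme, sub_mul, smul_mul_assoc, one_mul, hkm]
  have hpos : v • m - 1 ∈ er.Epos := by
    rw [← hme]; exact epos_mul_comm hmE hvk hcomm2
  refine ⟨v⁻¹, by positivity, ?_⟩
  show m - v⁻¹ • (1:R) ∈ er.Epos
  have : v⁻¹ • (v • m - 1) = m - v⁻¹ • (1:R) := by
    rw [smul_sub, smul_smul, inv_mul_cancel₀ hv0.ne', one_smul]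
  rw [← this]
  exact hs _ (by positivity) _ hpos

/-- Uniqueness of commuting positive square roots. -/
lemma sqrt_unique (hQA : er.HasQA) {p s : R} (hpG : p ∈ er.G) (hsG : s ∈ er.G)
    (hpE : p ∈ er.Epos) (hsE : s ∈ er.Epos) (hsq : p^2 = s^2)
    (hcomm : p * s = s * p) : p = s := by
  have hC : Commute p s := hcomm
  have a1 : (p + s) * (p - s) = 0 := by
    rw [← hC.sq_sub_sq, hsq, sub_self]
  have ddE : (p - s) * (p - s) ∈ er.Epos := by
    have := G_sq_epos (G_sub hpG hsG); rwa [pow_two] at this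
  have hpd : Commute p (p - s) := (Commute.refl p).sub_right hC
  have hsd : Commute s (p - s) := hC.symm.sub_right (Commute.refl s)
  have m1 : p * ((p - s) * (p - s)) ∈ er.Epos :=
    epos_mul_comm hpE ddE (hpd.mul_right hpd).eq
  have m2 : s * ((p - s) * (p - s)) ∈ er.Epos :=
    epos_mul_comm hsE ddE (hsd.mul_right hsd).eq
  have hsum0 : p * ((p - s) * (p - s)) + s * ((p - s) * (p - s)) = 0 := by
    rw [← add_mul, ← mul_assoc, a1, zero_mul]
  have hp0 : p * ((p - s) * (p - s)) = 0 := by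
    refine er.epos_i _ m1 ?_
    rw [neg_eq_of_add_eq_zero_right hsum0]
    exact m2
  have hs0 : s * ((p - s) * (p - s)) = 0 := by
    have := hsum0; rwa [hp0, zero_add] at this
  have hd3 : (p - s) * ((p - s) * (p - s)) = 0 := by
    rw [sub_mul, hp0, hs0, sub_zero]
  have hd4 : ((p - s) * (p - s)) * ((p - s) * (p - s)) = 0 := by
    rw [mul_assoc (p - s) (p - s) ((p - s) * (p - s)), hd3, mul_zero]
  have ddG : (p - s) * (p - s) ∈ er.G := G_of_epos ddE
  have hdd0 : (p - s) * (p - s) = 0 := by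
    have := (hQA 1 G_one _ ddG (by
      show 1 * ((p - s) * (p - s))^2 * 1 = 0
      rw [pow_two, one_mul, mul_one, hd4])).1
    rwa [one_mul] at this
  have hd0 : p - s = 0 := by
    have := (hQA 1 G_one _ (G_sub hpG hsG) (by
      show 1 * (p - s)^2 * 1 = 0
      rw [pow_two, one_mul, mul_one, hdd0])).1
    rwa [one_mul] at this
  exact sub_eq_zero.mp hd0

end ERing
/-- In an AH-algebra (with real scalars), the following are
equivalent: (i) `g` is invertible; (ii) `|g|` is invertible; (iii) `λ·1 ≤ |g|` for
some real `λ > 0`. Moreover, if `g⁻¹` exists, then `g⁻¹ ∈ CC(g)` and the signum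
`s = (g⁺)° − (g⁻)°` satisfies `s² = 1`. -/
theorem stmt11 {R : Type*} [Ring R] [Algebra ℝ R] (er : ERing R) (hAH : er.IsAH)
    (hscal : ∀ l : ℝ, 0 ≤ l → ∀ a ∈ er.Epos, l • a ∈ er.Epos)
    (g m a b pa pb : R) (hg : g ∈ er.G) (hm : er.IsAbs g m)
    (ha : er.IsPosPart g a) (hb : er.IsNegPart g b)
    (hpa : er.IsCarrier a pa) (hpb : er.IsCarrier b pb) :
    ((∃ h ∈ er.G, g * h = 1 ∧ h * g = 1) ↔ (∃ h ∈ er.G, m * h = 1 ∧ h * m = 1)) ∧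
    ((∃ h ∈ er.G, g * h = 1 ∧ h * g = 1) ↔
      (∃ l : ℝ, 0 < l ∧ er.le (l • (1 : R)) m)) ∧
    (∀ h ∈ er.G, g * h = 1 → h * g = 1 → h ∈ er.CC {g}) ∧
    ((∃ h ∈ er.G, g * h = 1 ∧ h * g = 1) → (pa - pb) ^ 2 = 1) := by
  obtain ⟨-, hQA, hCV⟩ := hAH
  have hs : er.Scal := hscal
  obtain ⟨hmG, hm0, hmsq⟩ := hm
  have hm2 : m * m = g * g := by
    have := hmsq; rwa [pow_two, pow_two] at this
  have part1 : (∃ h ∈ er.G, g * h = 1 ∧ h * g = 1) ↔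
      (∃ h ∈ er.G, m * h = 1 ∧ h * m = 1) := by
    constructor
    · rintro ⟨h, hhG, h1, h2⟩
      exact ERing.inv_transfer hs hmG hm2 hhG h1 h2
    · rintro ⟨h, hhG, h1, h2⟩
      exact ERing.inv_transfer hs hg hm2.symm hhG h1 h2
  have part2 : (∃ h ∈ er.G, g * h = 1 ∧ h * g = 1) ↔
      (∃ l : ℝ, 0 < l ∧ er.le (l • (1 : R)) m) := by
    constructor
    · intro hinv
      obtain ⟨k, hkG, h1, h2⟩ := part1.mp hinv
      exact ERing.pos_inv_lower hs hmG hm0 hkG h1 h2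
    · rintro ⟨l, hl, hlow⟩
      obtain ⟨v, hv1, hup⟩ := ERing.order_unit hs hmG
      obtain ⟨k, hkG, h1, h2, -, -⟩ := ERing.inv_exists hQA hCV hs hmG hl hlow hv1 hup
      exact part1.mpr ⟨k, hkG, h1, h2⟩
  have part3 : ∀ h ∈ er.G, g * h = 1 → h * g = 1 → h ∈ er.CC {g} := by
    intro h hhG hgh hhg
    refine ⟨hhG, ?_⟩
    rintro k ⟨hkG, hk⟩
    have hkg : k * g = g * k := hk g rfl
    show h * k = k * h
    calc h * k = h * (k * (g * h)) := by rw [hgh, mul_one]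
      _ = h * ((k * g) * h) := by rw [mul_assoc]
      _ = h * ((g * k) * h) := by rw [hkg]
      _ = ((h * g) * k) * h := by rw [← mul_assoc, ← mul_assoc]
      _ = k * h := by rw [hhg, one_mul]
  refine ⟨part1, part2, part3, ?_⟩
  rintro ⟨h, hhG, hgh, hhg⟩
  have hg2inv1 : (g * g) * (h * h) = 1 := by
    rw [show (g*g)*(h*h) = g*((g*h)*h) by rw [mul_assoc, mul_assoc], hgh, one_mul, hgh]
  have hg2inv2 : (h * h) * (g * g) = 1 := by
    rw [show (h*h)*(g*g) = h*((h*g)*g) by rw [mul_assoc, mul_assoc], hhg, one_mul, hhg]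
  have hg2E : g * g ∈ er.Epos := by have := ERing.G_sq_epos hg; rwa [pow_two] at this
  have hh2G : h * h ∈ er.G := by
    have := ERing.G_of_epos (ERing.G_sq_epos hhG); rwa [pow_two] at this
  obtain ⟨l2, hl2, hlow2⟩ := ERing.pos_inv_lower hs (ERing.G_of_epos hg2E)
    (ERing.nonneg_iff.mpr hg2E) hh2G hg2inv1 hg2inv2
  obtain ⟨v2, hv21, hup2⟩ := ERing.order_unit hs (ERing.G_of_epos hg2E)
  have hv20 : (0:ℝ) < v2 := lt_of_lt_of_le one_pos hv21
  have hl2v : l2 ≤ v2 := ERing.scalar_le_real hs (ERing.le_trans hlow2 hup2)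
  obtain ⟨c, hcdef⟩ : ∃ c : R, c = v2⁻¹ • (g * g) := ⟨_, rfl⟩
  have hcG : c ∈ er.G := by rw [hcdef]; exact ERing.G_smul hs _ (ERing.G_of_epos hg2E)
  have hl' : (0:ℝ) < l2 / v2 := by positivity
  have hl'1 : l2 / v2 ≤ 1 := (div_le_one hv20).mpr hl2v
  have hclow : er.le ((l2 / v2) • (1:R)) c := by
    show c - (l2/v2) • (1:R) ∈ er.Epos
    have heq : c - (l2/v2) • (1:R) = v2⁻¹ • ((g*g) - l2 • (1:R)) := by
      rw [hcdef, smul_sub, smul_smul,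
        show v2⁻¹ * l2 = l2 / v2 by rw [div_eq_mul_inv, mul_comm]]
    rw [heq]; exact hs _ (by positivity) _ hlow2
  have hcup : er.le c 1 := by
    show (1:R) - c ∈ er.Epos
    have heq : (1:R) - c = v2⁻¹ • (v2 • (1:R) - (g*g)) := by
      rw [hcdef, smul_sub, smul_smul, inv_mul_cancel₀ hv20.ne', one_smul]
    rw [heq]; exact hs _ (by positivity) _ hup2
  obtain ⟨s', hs'G, hs'low, hs'0, hs'sq, hs'comm⟩ :=
    ERing.sqrt_exists hQA hCV hs hcG hl' hl'1 hclow hcup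
  obtain ⟨s, hsdef⟩ : ∃ s : R, s = (Real.sqrt v2) • s' := ⟨_, rfl⟩
  have hrv2 : (0:ℝ) < Real.sqrt v2 := Real.sqrt_pos.mpr hv20
  have hsG : s ∈ er.G := by rw [hsdef]; exact ERing.G_smul hs _ hs'G
  have hsE : s ∈ er.Epos := by
    rw [hsdef]
    exact hs _ hrv2.le _ (ERing.nonneg_iff.mp hs'0)
  have hssq : s * s = g * g := by
    rw [hsdef, smul_mul_assoc, mul_smul_comm, smul_smul,
      Real.mul_self_sqrt hv20.le, show s' * s' = c by rw [← pow_two]; exact hs'sq,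
      hcdef, smul_smul, mul_inv_cancel₀ hv20.ne', one_smul]
  have hscomm : ∀ j ∈ er.G, j * (g * g) = (g * g) * j → j * s = s * j := by
    intro j hjG hjgg
    have hjc : j * c = c * j := by
      rw [hcdef, mul_smul_comm, smul_mul_assoc, hjgg]
    have h9 := hs'comm j hjG hjc
    rw [hsdef, mul_smul_comm, smul_mul_assoc, h9]
  have hslow : er.le ((Real.sqrt v2 * (l2 / v2 / 2)) • (1:R)) s := by
    show s - (Real.sqrt v2 * (l2 / v2 / 2)) • (1:R) ∈ er.Epos
    have heq : s - (Real.sqrt v2 * (l2/v2/2)) • (1:R)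
        = (Real.sqrt v2) • (s' - ((l2/v2)/2) • (1:R)) := by
      rw [hsdef, smul_sub, smul_smul]
    rw [heq]; exact hs _ hrv2.le _ hs'low
  have huniq : ∀ p, er.IsAbs g p → p = s := by
    rintro p ⟨hpG, hp0, hpsq⟩
    have hpE : p ∈ er.Epos := ERing.nonneg_iff.mp hp0
    have hpcomm : p * s = s * p := by
      refine hscomm p hpG ?_
      rw [show g*g = p*p from by rw [← pow_two, ← pow_two, hpsq], ← mul_assoc]
    exact ERing.sqrt_unique hQA hpG hsG hpE hsE
      (by rw [hpsq, pow_two, pow_two, hssq]) hpcomm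
  obtain ⟨haG, m1, habs1, hsum1⟩ := ha
  obtain ⟨hbG, m2, habs2, hsum2⟩ := hb
  rw [huniq m1 habs1] at hsum1
  rw [huniq m2 habs2] at hsum2
  have hgs : g * s = s * g := hscomm g hg (by rw [← mul_assoc])
  obtain ⟨vs, hvs1, hsup⟩ := ERing.order_unit hs hsG
  obtain ⟨k, hkG, hsk, hks, hk0, hkcomm⟩ := ERing.inv_exists hQA hCV hs hsG
    (by positivity) hslow hvs1 hsup
  have hkE : k ∈ er.Epos := ERing.nonneg_iff.mp hk0
  have hkg : g * k = k * g := hkcomm g hg hgs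
  have hks' : k * s = s * k := by rw [hsk, hks]
  have key : ∀ z, z ∈ er.G → k * z = z * k → z * z = (2:ℝ) • (s * z) → z ∈ er.Epos := by
    intro z hzG hkz hzz
    have h1 : z = (2⁻¹:ℝ) • (k * (z * z)) := by
      rw [hzz, mul_smul_comm, ← mul_assoc, hks, one_mul, smul_smul,
        show (2⁻¹:ℝ) * 2 = 1 by norm_num, one_smul]
    have hzzE : z * z ∈ er.Epos := by
      have := ERing.G_sq_epos hzG; rwa [pow_two] at this
    have hcm : k * (z * z) = (z * z) * k :=
      ((show Commute k z from hkz).mul_right (show Commute k z from hkz)).eq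
    rw [h1]
    exact hs _ (by norm_num) _ (ERing.epos_mul_comm hkE hzzE hcm)
  have hu_comm : k * (s + g) = (s + g) * k := by
    rw [mul_add, add_mul, hks', hkg]
  have hv_comm : k * (s - g) = (s - g) * k := by
    rw [mul_sub, sub_mul, hks', hkg]
  have hu_sq : (s + g) * (s + g) = (2:ℝ) • (s * (s + g)) := by
    simp only [mul_add, add_mul, two_smul]
    rw [hgs, ← hssq]; abel
  have hv_sq : (s - g) * (s - g) = (2:ℝ) • (s * (s - g)) := by
    simp only [mul_sub, sub_mul, two_smul]
    rw [hgs, ← hssq]; abel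
  have huE : s + g ∈ er.Epos := key _ (ERing.G_add hsG hg) hu_comm hu_sq
  have hvE : s - g ∈ er.Epos := key _ (ERing.G_sub hsG hg) hv_comm hv_sq
  have ha_eq : a = (2⁻¹:ℝ) • (s + g) := by
    rw [← hsum1, ← two_smul ℝ a, smul_smul, show (2⁻¹:ℝ) * 2 = 1 by norm_num, one_smul]
  have hb_eq : b = (2⁻¹:ℝ) • (s - g) := by
    rw [← hsum2, ← two_smul ℝ b, smul_smul, show (2⁻¹:ℝ) * 2 = 1 by norm_num, one_smul]
  have haE : a ∈ er.Epos := by rw [ha_eq]; exact hs _ (by norm_num) _ huE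
  have hbE : b ∈ er.Epos := by rw [hb_eq]; exact hs _ (by norm_num) _ hvE
  have hab : a - b = g := by
    rw [ha_eq, hb_eq, ← smul_sub, show (s + g) - (s - g) = g + g by abel,
      ← two_smul ℝ g, smul_smul, show (2⁻¹:ℝ) * 2 = 1 by norm_num, one_smul]
  have huv : (s + g) * (s - g) = 0 := by
    simp only [mul_sub, add_mul]
    rw [hgs, ← hssq]; abel
  have hvu : (s - g) * (s + g) = 0 := by
    simp only [mul_add, sub_mul]
    rw [hgs, ← hssq]; abel
  have hab0 : a * b = 0 := by
    rw [ha_eq, hb_eq, smul_mul_assoc, mul_smul_comm, huv, smul_zero, smul_zero]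
  have hba0 : b * a = 0 := by
    rw [ha_eq, hb_eq, smul_mul_assoc, mul_smul_comm, hvu, smul_zero, smul_zero]
  obtain ⟨⟨hpaG, hpa_idem⟩, hcar_a⟩ := hpa
  obtain ⟨⟨hpbG, hpb_idem⟩, hcar_b⟩ := hpb
  have hpa_mul : pa * pa = pa := by rw [← pow_two]; exact hpa_idem.symm
  have hpb_mul : pb * pb = pb := by rw [← pow_two]; exact hpb_idem.symm
  -- pa * a = a
  have carrier_fix : ∀ (p z : R), p ∈ er.G → z ∈ er.Epos → p * p = p →
      (∀ w ∈ er.G, (z * w = 0 ↔ p * w = 0)) → p * z = z := by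
    intro p z hpG hzE hpp hcar
    have h1 : p * (1 - p) = 0 := by rw [mul_sub, mul_one, hpp, sub_self]
    have h2 : z * (1 - p) = 0 := (hcar (1 - p) (ERing.G_sub ERing.G_one hpG)).mpr h1
    have h3 : (1 - p) * z * (1 - p) = 0 := by rw [mul_assoc, h2, mul_zero]
    have h1pE : (1:R) - p ∈ er.Epos := by
      have hsq : ((1:R) - p)^2 = 1 - p := by
        simp only [pow_two, mul_sub, sub_mul, mul_one, one_mul, hpp]
        abel
      have := ERing.G_sq_epos (ERing.G_sub ERing.G_one hpG); rwa [hsq] at this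
    have h4 := (er.epos_v _ h1pE _ hzE h3).1
    rw [sub_mul, one_mul] at h4
    exact (sub_eq_zero.mp h4).symm
  have hpaa : pa * a = a := carrier_fix pa a hpaG haE hpa_mul hcar_a
  have hpbb : pb * b = b := carrier_fix pb b hpbG hbE hpb_mul hcar_b
  have pab : pa * b = 0 := (hcar_a b hbG).mp hab0
  have bpa : b * pa = 0 := by
    refine (hQA pa hpaG b hbG ?_).2
    rw [pow_two, ← mul_assoc, pab, zero_mul, zero_mul]
  have pbpa : pb * pa = 0 := (hcar_b pa hpaG).mp bpa
  have pba : pb * a = 0 := (hcar_b a haG).mp hba0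
  have apb : a * pb = 0 := by
    refine (hQA pb hpbG a haG ?_).2
    rw [pow_two, ← mul_assoc, pba, zero_mul, zero_mul]
  have papb : pa * pb = 0 := (hcar_a pb hpbG).mp apb
  have h5 : (pa + pb) * g = g := by
    rw [← hab, add_mul, mul_sub, mul_sub, hpaa, pab, pba, hpbb]
    abel
  have h6 : (1 - (pa + pb)) * g = 0 := by rw [sub_mul, one_mul, h5, sub_self]
  have h7 : (1:R) - (pa + pb) = 0 := by
    calc (1:R) - (pa + pb) = (1 - (pa + pb)) * (g * h) := by rw [hgh, mul_one]
      _ = ((1 - (pa + pb)) * g) * h := by rw [mul_assoc]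
      _ = 0 := by rw [h6, zero_mul]
  have hsum_p : pa + pb = 1 := (sub_eq_zero.mp h7).symm
  have hfinal : (pa - pb)^2 = pa + pb := by
    rw [pow_two, sub_mul, mul_sub, mul_sub, hpa_mul, hpb_mul, papb, pbpa]
    abel
  rw [hfinal, hsum_p]
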